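/- Let a > 0. For every nonnegative integer n and every real x, ∑_{i=0}^{n} A_i(x) Δ^i C_n^{(a)}(x) = (-1)^{n-1} C_n^{(a)}(0) C_{n-1}^{(a)}(x-2), where A_0 = (-1)^{n-1} C_{n-1}^{(a)}(-2) and, for i ≥ 1, A_i(x) = ∑_{k=1}^i (-1)^k C_{i-k}^{(-a)}(-x+1) [C_k^{(a)}(-1) C_k^{(a)}(x-2) − C_k^{(a)}(-2) C_k^{(a)}(x-1)]. -/

import Mathlib

/-- Generalized binomial coefficient `x(x-1)⋯(x-k+1)/k!`. -/
noncomputable def genChoose (x : ℝ) (k : ℕ) : ℝ :=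
  (∏ j ∈ Finset.range k, (x - (j : ℝ))) / (Nat.factorial k : ℝ)

/-- The Charlier polynomial `C_n^{(a)}(x) = ∑_{k=0}^n (x choose k) (-a)^{n-k}/(n-k)!`. -/
noncomputable def charlier (a : ℝ) (n : ℕ) (x : ℝ) : ℝ :=
  ∑ k ∈ Finset.range (n + 1),
    genChoose x k * (-a) ^ (n - k) / (Nat.factorial (n - k) : ℝ)

/-- Charlier polynomial with integer index, with the convention `C_{-1}^{(a)} ≡ 0`. -/
noncomputable def charlierZ (a : ℝ) (n : ℤ) (x : ℝ) : ℝ :=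
  if 0 ≤ n then charlier a n.toNat x else 0

/-- Forward difference operator `Δf(x) = f(x+1) - f(x)`. -/
def fdiff (f : ℝ → ℝ) : ℝ → ℝ := fun x => f (x + 1) - f x

/-- Backward difference operator `∇f(x) = f(x) - f(x-1)`. -/
def bdiff (f : ℝ → ℝ) : ℝ → ℝ := fun x => f x - f (x - 1)

/-- The generalized Charlier polynomial
`C_n^{a,N}(x) = [1 + N(-1)^n C_n^{(a)}(-1)] C_n^{(a)}(x) - N(-1)^n C_n^{(a)}(0) C_n^{(a)}(x-1)`. -/
noncomputable def genCharlier (a N : ℝ) (n : ℕ) (x : ℝ) : ℝ :=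
  (1 + N * (-1) ^ n * charlier a n (-1)) * charlier a n x
    - N * (-1) ^ n * charlier a n 0 * charlier a n (x - 1)

/-- The coefficient `A_i(x)` (for `i ≥ 1`) of the difference equation. -/
noncomputable def Acoef (a : ℝ) (i : ℕ) (x : ℝ) : ℝ :=
  ∑ k ∈ Finset.Icc 1 i, (-1 : ℝ) ^ k * charlier (-a) (i - k) (-x + 1) *
    (charlier a k (-1) * charlier a k (x - 2) - charlier a k (-2) * charlier a k (x - 1))

/-- The coefficient `A_0 = (-1)^{n-1} C_{n-1}^{(a)}(-2)` (with `C_{-1}^{(a)} ≡ 0`). -/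
noncomputable def A0coef (a : ℝ) (n : ℕ) : ℝ :=
  (-1 : ℝ) ^ ((n : ℤ) - 1) * charlierZ a ((n : ℤ) - 1) (-2)

lemma gc_zero (x : ℝ) : genChoose x 0 = 1 := by simp [genChoose]

lemma gc_one' (x : ℝ) : genChoose x 1 = x := by simp [genChoose]

lemma gc_succ (x : ℝ) (k : ℕ) :
    ((k : ℝ) + 1) * genChoose x (k + 1) = x * genChoose (x - 1) k := by
  have h : ∏ j ∈ Finset.range (k + 1), (x - (j : ℝ)) =
      x * ∏ j ∈ Finset.range k, (x - 1 - (j : ℝ)) := by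
    rw [Finset.prod_range_succ']
    simp only [Nat.cast_zero, sub_zero]
    rw [mul_comm]
    congr 1
    apply Finset.prod_congr rfl
    intro j _
    push_cast
    ring
  have hf : (Nat.factorial (k + 1) : ℝ) = ((k : ℝ) + 1) * (Nat.factorial k : ℝ) := by
    rw [Nat.factorial_succ]; push_cast; ring
  have hk : ((k : ℝ) + 1) ≠ 0 := by positivity
  have hfk : (Nat.factorial k : ℝ) ≠ 0 := by
    exact_mod_cast Nat.factorial_ne_zero k
  unfold genChoose
  rw [h, hf]
  field_simp [genChoose, hf, h]

lemma gc_pascal (x : ℝ) (k : ℕ) :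
    genChoose (x + 1) (k + 1) - genChoose x (k + 1) = genChoose x k := by
  have h1 : ∏ j ∈ Finset.range (k + 1), (x + 1 - (j : ℝ)) =
      (x + 1) * ∏ j ∈ Finset.range k, (x - (j : ℝ)) := by
    rw [Finset.prod_range_succ']
    simp only [Nat.cast_zero, sub_zero]
    rw [mul_comm]
    congr 1
    apply Finset.prod_congr rfl
    intro j _
    push_cast
    ring
  have h2 : ∏ j ∈ Finset.range (k + 1), (x - (j : ℝ)) =
      (∏ j ∈ Finset.range k, (x - (j : ℝ))) * (x - k) := by
    rw [Finset.prod_range_succ]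
  have hf : (Nat.factorial (k + 1) : ℝ) = ((k : ℝ) + 1) * (Nat.factorial k : ℝ) := by
    rw [Nat.factorial_succ]; push_cast; ring
  have hk : ((k : ℝ) + 1) ≠ 0 := by positivity
  have hfk : (Nat.factorial k : ℝ) ≠ 0 := by exact_mod_cast Nat.factorial_ne_zero k
  unfold genChoose
  rw [h1, h2, hf]
  field_simp [genChoose, hf, h1, h2]
  ring

lemma gc_one (m : ℕ) : genChoose 1 m = if m ≤ 1 then 1 else 0 := by
  match m with
  | 0 => simp [gc_zero]
  | 1 => simp [gc_one']
  | (k+2) =>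
    have : (2 : ℕ) ≤ k + 2 := by omega
    simp only [genChoose]
    rw [show (if k + 2 ≤ 1 then (1:ℝ) else 0) = 0 by simp]
    have : ∏ j ∈ Finset.range (k + 2), ((1:ℝ) - (j : ℝ)) = 0 := by
      apply Finset.prod_eq_zero (i := 1) (by simp)
      norm_num
    rw [this, zero_div]

lemma vdm : ∀ (m : ℕ) (x y : ℝ),
    ∑ k ∈ Finset.range (m + 1), genChoose x k * genChoose y (m - k) = genChoose (x + y) m := by
  intro m
  induction m with
  | zero => intro x y; simp [gc_zero]
  | succ m ih =>
    intro x y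
    have key : ((m : ℝ) + 1) * ∑ k ∈ Finset.range (m + 2), genChoose x k * genChoose y (m + 1 - k)
        = ((m : ℝ) + 1) * genChoose (x + y) (m + 1) := by
      have expand : ((m : ℝ) + 1) * ∑ k ∈ Finset.range (m + 2), genChoose x k * genChoose y (m + 1 - k)
          = (∑ k ∈ Finset.range (m + 2), (k : ℝ) * genChoose x k * genChoose y (m + 1 - k))
          + (∑ k ∈ Finset.range (m + 2), ((m : ℝ) + 1 - k) * genChoose x k * genChoose y (m + 1 - k)) := by
        rw [Finset.mul_sum, ← Finset.sum_add_distrib]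
        apply Finset.sum_congr rfl
        intro k _
        ring
      have s1 : (∑ k ∈ Finset.range (m + 2), (k : ℝ) * genChoose x k * genChoose y (m + 1 - k))
          = x * genChoose (x - 1 + y) m := by
        rw [Finset.sum_range_succ']
        simp only [Nat.cast_zero, zero_mul, add_zero]
        calc ∑ k ∈ Finset.range (m+1), ((k+1 : ℕ) : ℝ) * genChoose x (k + 1) * genChoose y (m + 1 - (k + 1))
            = ∑ k ∈ Finset.range (m+1), x * (genChoose (x - 1) k * genChoose y (m - k)) := by
              apply Finset.sum_congr rfl
              intro k hk
              have hmk : m + 1 - (k + 1) = m - k := by omega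
              rw [hmk]
              push_cast
              linear_combination genChoose y (m - k) * gc_succ x k
          _ = x * genChoose (x - 1 + y) m := by rw [← Finset.mul_sum, ih]
      have s2 : (∑ k ∈ Finset.range (m + 2), ((m : ℝ) + 1 - k) * genChoose x k * genChoose y (m + 1 - k))
          = y * genChoose (x + (y - 1)) m := by
        rw [Finset.sum_range_succ]
        have hz : ((m : ℝ) + 1 - ((m + 1 : ℕ) : ℝ)) = 0 := by push_cast; ring
        rw [hz, zero_mul, zero_mul, add_zero]
        calc ∑ k ∈ Finset.range (m+1), ((m : ℝ) + 1 - k) * genChoose x k * genChoose y (m + 1 - k)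
            = ∑ k ∈ Finset.range (m+1), y * (genChoose x k * genChoose (y - 1) (m - k)) := by
              apply Finset.sum_congr rfl
              intro k hk
              simp only [Finset.mem_range] at hk
              have hmk : m + 1 - k = (m - k) + 1 := by omega
              have hc : ((m : ℝ) + 1 - k) = ((m - k : ℕ) : ℝ) + 1 := by
                push_cast [Nat.cast_sub (by omega : k ≤ m)]; ring
              rw [hmk, hc]
              linear_combination genChoose x k * gc_succ y (m - k)
          _ = y * genChoose (x + (y - 1)) m := by rw [← Finset.mul_sum, ih]
      have s3 : ((m : ℝ) + 1) * genChoose (x + y) (m + 1) = (x + y) * genChoose (x + y - 1) m :=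
        gc_succ (x + y) m
      rw [expand, s1, s2, s3]
      have e1 : x - 1 + y = x + y - 1 := by ring
      have e2 : x + (y - 1) = x + y - 1 := by ring
      rw [e1, e2]
      ring
    have hne : ((m : ℝ) + 1) ≠ 0 := by positivity
    exact mul_left_cancel₀ hne key

noncomputable def ee (a : ℝ) (d : ℤ) : ℝ :=
  if 0 ≤ d then (-a) ^ d.toNat / (Nat.factorial d.toNat : ℝ) else 0

lemma ee_neg {a : ℝ} {d : ℤ} (h : d < 0) : ee a d = 0 := by
  simp [ee, not_le.mpr h]

lemma ee_coe (a : ℝ) (d : ℕ) : ee a (d : ℤ) = (-a) ^ d / (Nat.factorial d : ℝ) := by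
  simp [ee]

lemma ee_conv (a b : ℝ) (d : ℕ) :
    ∑ r ∈ Finset.range (d + 1), ((-a) ^ r / (Nat.factorial r : ℝ)) * ((-b) ^ (d - r) / (Nat.factorial (d - r) : ℝ))
      = (-(a + b)) ^ d / (Nat.factorial d : ℝ) := by
  have h := add_pow (-a) (-b) d
  have hd : (Nat.factorial d : ℝ) ≠ 0 := by exact_mod_cast Nat.factorial_ne_zero d
  rw [show (-(a+b)) = (-a) + (-b) by ring, h, Finset.sum_div]
  apply Finset.sum_congr rfl
  intro r hr
  simp only [Finset.mem_range] at hr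
  have hr' : r ≤ d := by omega
  have hfac : ((d.choose r : ℕ) : ℝ) * (Nat.factorial r : ℝ) * (Nat.factorial (d - r) : ℝ)
      = (Nat.factorial d : ℝ) := by
    exact_mod_cast congrArg Nat.cast (Nat.choose_mul_factorial_mul_factorial hr')
  have h1 : (Nat.factorial r : ℝ) ≠ 0 := by exact_mod_cast Nat.factorial_ne_zero r
  have h2 : (Nat.factorial (d-r) : ℝ) ≠ 0 := by exact_mod_cast Nat.factorial_ne_zero (d-r)
  field_simp
  linear_combination (-(-a)^r * (-b)^(d-r)) * hfac

lemma window (b c : ℝ) (m p q : ℕ) (hp : p ≤ m) :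
    ∑ j ∈ Finset.range (m + 1), ee b ((j : ℤ) - p) * ee c ((m : ℤ) - q - j)
      = if p + q ≤ m then (-(b + c)) ^ (m - p - q) / (Nat.factorial (m - p - q) : ℝ) else 0 := by
  by_cases hpq : p + q ≤ m
  · rw [if_pos hpq]
    set d := m - p - q with hd
    have hm : m + 1 = p + ((d + 1) + (m - p - d)) := by omega
    rw [hm, Finset.sum_range_add, Finset.sum_range_add]
    have z1 : ∑ j ∈ Finset.range p, ee b ((j : ℤ) - p) * ee c ((m : ℤ) - q - j) = 0 := by
      apply Finset.sum_eq_zero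
      intro j hj
      simp only [Finset.mem_range] at hj
      rw [ee_neg (by omega : (j : ℤ) - p < 0), zero_mul]
    have z2 : ∑ j ∈ Finset.range (m - p - d), ee b (((p + (d + 1 + j) : ℕ) : ℤ) - p) * ee c ((m : ℤ) - q - ((p + (d + 1 + j) : ℕ))) = 0 := by
      apply Finset.sum_eq_zero
      intro j hj
      rw [ee_neg (by push_cast; omega : (m : ℤ) - q - ((p + (d + 1 + j) : ℕ) : ℤ) < 0), mul_zero]
    rw [z1, z2, zero_add, add_zero]
    have main : ∑ j ∈ Finset.range (d + 1), ee b (((p + j : ℕ) : ℤ) - p) * ee c ((m : ℤ) - q - ((p + j : ℕ) : ℤ))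
        = ∑ r ∈ Finset.range (d + 1), ((-b) ^ r / (Nat.factorial r : ℝ)) * ((-c) ^ (d - r) / (Nat.factorial (d - r) : ℝ)) := by
      apply Finset.sum_congr rfl
      intro r hr
      simp only [Finset.mem_range] at hr
      have e1 : ((p + r : ℕ) : ℤ) - p = (r : ℤ) := by push_cast; ring
      have e2 : (m : ℤ) - q - ((p + r : ℕ) : ℤ) = ((d - r : ℕ) : ℤ) := by push_cast; omega
      rw [e1, e2, ee_coe, ee_coe]
    rw [main, ee_conv]
  · rw [if_neg hpq]
    apply Finset.sum_eq_zero
    intro j hj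
    simp only [Finset.mem_range] at hj
    by_cases hjp : (j : ℤ) - p < 0
    · rw [ee_neg hjp, zero_mul]
    · rw [ee_neg (by omega : (m : ℤ) - q - j < 0), mul_zero]

lemma charlier_ee (a : ℝ) (n : ℕ) (x : ℝ) {M : ℕ} (hM : n + 1 ≤ M) :
    charlier a n x = ∑ k ∈ Finset.range M, genChoose x k * ee a ((n : ℤ) - k) := by
  rw [charlier]
  rw [← Finset.sum_subset (Finset.range_subset_range.mpr hM)]
  · apply Finset.sum_congr rfl
    intro k hk
    simp only [Finset.mem_range] at hk
    have : ((n : ℤ) - k) = ((n - k : ℕ) : ℤ) := by push_cast; omega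
    rw [this, ee_coe]
    ring
  · intro k _ hk
    simp only [Finset.mem_range, not_lt] at hk
    rw [ee_neg (by omega : (n : ℤ) - k < 0), mul_zero]

lemma conv (a x y : ℝ) (m : ℕ) :
    ∑ j ∈ Finset.range (m + 1), charlier (-a) j y * charlier a (m - j) x
      = genChoose (x + y) m := by
  have step1 : ∀ j ∈ Finset.range (m + 1),
      charlier (-a) j y * charlier a (m - j) x
        = ∑ p ∈ Finset.range (m + 1), ∑ q ∈ Finset.range (m + 1),
            (genChoose y p * genChoose x q) * (ee (-a) ((j : ℤ) - p) * ee a ((m : ℤ) - q - j)) := by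
    intro j hj
    simp only [Finset.mem_range] at hj
    rw [charlier_ee (-a) j y (M := m+1) (by omega), charlier_ee a (m - j) x (M := m+1) (by omega : (m-j)+1 ≤ m+1),
      Finset.sum_mul_sum]
    apply Finset.sum_congr rfl
    intro p _
    apply Finset.sum_congr rfl
    intro q _
    have : ((m - j : ℕ) : ℤ) - q = (m : ℤ) - q - j := by push_cast; omega
    rw [this]
    ring
  rw [Finset.sum_congr rfl step1, Finset.sum_comm]
  have swap2 : ∑ p ∈ Finset.range (m + 1), ∑ j ∈ Finset.range (m + 1), ∑ q ∈ Finset.range (m + 1),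
      (genChoose y p * genChoose x q) * (ee (-a) ((j : ℤ) - p) * ee a ((m : ℤ) - q - j))
    = ∑ p ∈ Finset.range (m + 1), ∑ q ∈ Finset.range (m + 1),
        (genChoose y p * genChoose x q) * ∑ j ∈ Finset.range (m + 1), (ee (-a) ((j : ℤ) - p) * ee a ((m : ℤ) - q - j)) := by
    apply Finset.sum_congr rfl
    intro p _
    rw [Finset.sum_comm]
    apply Finset.sum_congr rfl
    intro q _
    rw [Finset.mul_sum]
  rw [swap2]
  have inner : ∀ p ∈ Finset.range (m + 1), ∀ q ∈ Finset.range (m + 1),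
      (∑ j ∈ Finset.range (m + 1), ee (-a) ((j : ℤ) - p) * ee a ((m : ℤ) - q - j))
        = if p + q = m then 1 else 0 := by
    intro p hp q hq
    simp only [Finset.mem_range] at hp hq
    rw [window (-a) a m p q (by omega)]
    by_cases h : p + q ≤ m
    · rw [if_pos h]
      rcases eq_or_lt_of_le h with he | hlt
      · rw [if_pos he, show m - p - q = 0 by omega]
        norm_num
      · rw [if_neg (by omega)]
        rw [show (-(-a + a)) = 0 by ring, zero_pow (by omega : m - p - q ≠ 0), zero_div]
    · rw [if_neg h, if_neg (by omega)]
  calc ∑ p ∈ Finset.range (m + 1), ∑ q ∈ Finset.range (m + 1),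
        (genChoose y p * genChoose x q) * ∑ j ∈ Finset.range (m + 1), (ee (-a) ((j : ℤ) - p) * ee a ((m : ℤ) - q - j))
      = ∑ p ∈ Finset.range (m + 1), ∑ q ∈ Finset.range (m + 1),
        (genChoose y p * genChoose x q) * (if p + q = m then 1 else 0) := by
        apply Finset.sum_congr rfl
        intro p hp
        apply Finset.sum_congr rfl
        intro q hq
        rw [inner p hp q hq]
    _ = ∑ p ∈ Finset.range (m + 1), genChoose y p * genChoose x (m - p) := by
        apply Finset.sum_congr rfl
        intro p hp
        simp only [Finset.mem_range] at hp
        rw [Finset.sum_eq_single (m - p)]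
        · rw [if_pos (by omega), mul_one]
        · intro q hq hne
          rw [if_neg (by simp only [Finset.mem_range] at hq; omega), mul_zero]
        · intro h
          exact absurd (Finset.mem_range.mpr (by omega)) h
    _ = genChoose (x + y) m := by rw [show x + y = y + x by ring, ← vdm m y x]

lemma charlier_zero (a : ℝ) (x : ℝ) : charlier a 0 x = 1 := by
  simp [charlier, gc_zero]

lemma fdiff_charlier (a : ℝ) (n : ℕ) : fdiff (charlier a (n + 1)) = charlier a n := by
  funext x
  show charlier a (n+1) (x+1) - charlier a (n+1) x = charlier a n x
  rw [charlier, charlier, ← Finset.sum_sub_distrib]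
  rw [Finset.sum_range_succ']
  have h0 : genChoose (x+1) 0 * (-a) ^ (n + 1 - 0) / (Nat.factorial (n+1-0) : ℝ)
      - genChoose x 0 * (-a) ^ (n + 1 - 0) / (Nat.factorial (n+1-0) : ℝ) = 0 := by
    rw [gc_zero, gc_zero]; ring
  rw [h0, add_zero, charlier]
  apply Finset.sum_congr rfl
  intro k hk
  have e : n + 1 - (k + 1) = n - k := by omega
  rw [e]
  have := gc_pascal x k
  field_simp
  linear_combination (-a) ^ (n - k) * this

lemma fdiff_charlierZ (a : ℝ) (m : ℤ) : fdiff (charlierZ a m) = charlierZ a (m - 1) := by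
  rcases lt_trichotomy m 0 with h | h | h
  · have h' : m - 1 < 0 := by omega
    funext x
    show charlierZ a m (x+1) - charlierZ a m x = charlierZ a (m-1) x
    simp [charlierZ, not_le.mpr h, not_le.mpr h']
    intro h1; omega
  · subst h
    funext x
    show charlierZ a 0 (x+1) - charlierZ a 0 x = charlierZ a (-1) x
    simp only [charlierZ]
    norm_num [charlier_zero]
  · obtain ⟨k, rfl⟩ : ∃ k : ℕ, m = (k : ℤ) + 1 := ⟨(m - 1).toNat, by omega⟩
    funext x
    show charlierZ a (k+1) (x+1) - charlierZ a (k+1) x = charlierZ a ((k:ℤ)+1-1) x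
    have e1 : ((k : ℤ) + 1).toNat = k + 1 := by omega
    have e2 : ((k : ℤ) + 1 - 1).toNat = k := by omega
    simp only [charlierZ]
    rw [if_pos (by omega : (0:ℤ) ≤ (k:ℤ)+1), if_pos (by omega : (0:ℤ) ≤ (k:ℤ)+1-1), e1, e2,
      if_pos (by omega : (0:ℤ) ≤ (k:ℤ)+1)]
    have := congrFun (fdiff_charlier a k) x
    simpa [fdiff] using this

lemma iter_fdiff (a : ℝ) (n i : ℕ) :
    fdiff^[i] (charlier a n) = charlierZ a ((n : ℤ) - i) := by
  induction i with
  | zero =>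
    funext x
    simp [charlierZ, (by omega : (0:ℤ) ≤ (n:ℤ)), (by omega : ((n:ℤ)).toNat = n)]
  | succ i ih =>
    rw [Function.iterate_succ_apply', ih, fdiff_charlierZ]
    congr 1
    push_cast
    ring

lemma charlier_rec (a : ℝ) (n : ℕ) (x : ℝ) :
    charlier a (n + 1) x - charlier a (n + 1) (x - 1) = charlier a n (x - 1) := by
  have := congrFun (fdiff_charlier a n) (x - 1)
  simp only [fdiff, sub_add_cancel] at this
  exact this

/-- D abbreviation -/
noncomputable def Dd (a : ℝ) (k : ℕ) (x : ℝ) : ℝ :=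
  charlier a k (-1) * charlier a k (x - 2) - charlier a k (-2) * charlier a k (x - 1)

lemma Dd_zero (a : ℝ) (x : ℝ) : Dd a 0 x = 0 := by
  simp [Dd, charlier_zero]

lemma charlierZ_of_le (a : ℝ) {n i : ℕ} (h : i ≤ n) (x : ℝ) :
    charlierZ a ((n : ℤ) - i) x = charlier a (n - i) x := by
  simp only [charlierZ]
  rw [if_pos (by omega : (0:ℤ) ≤ (n:ℤ) - i)]
  congr 1
  omega


/-- `∑_{i=0}^n A_i(x) Δ^i C_n^{(a)}(x) = (-1)^{n-1} C_n^{(a)}(0) C_{n-1}^{(a)}(x-2)`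
(with the convention `C_{-1}^{(a)} ≡ 0`). -/
theorem charlier_Acoef_sum_eq (a : ℝ) (ha : 0 < a) (n : ℕ) (x : ℝ) :
    ∑ i ∈ Finset.range (n + 1),
        (if i = 0 then A0coef a n else Acoef a i x) * fdiff^[i] (charlier a n) x
      = (-1 : ℝ) ^ ((n : ℤ) - 1) * charlier a n 0 * charlierZ a ((n : ℤ) - 1) (x - 2) := by
  rcases n with _ | m
  · -- n = 0
    simp only [Finset.range_one, Finset.sum_singleton, if_pos rfl, A0coef]
    have hz : charlierZ a (((0:ℕ) : ℤ) - 1) = fun _ => (0:ℝ) := by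
      funext t
      simp [charlierZ]
    rw [hz]
    simp
  · -- n = m + 1
    -- rewrite iterated differences
    have step1 : ∀ i ∈ Finset.range (m + 2),
        (if i = 0 then A0coef a (m+1) else Acoef a i x) * fdiff^[i] (charlier a (m+1)) x
        = (if i = 0 then A0coef a (m+1) else Acoef a i x) * charlier a (m + 1 - i) x := by
      intro i hi
      simp only [Finset.mem_range] at hi
      rw [iter_fdiff, charlierZ_of_le a (by omega : i ≤ m + 1)]
    rw [Finset.sum_congr rfl step1, Finset.sum_range_succ']
    simp only [reduceIte, Nat.sub_zero]
    have hne : ∀ i : ℕ, i + 1 ≠ 0 := fun i => Nat.succ_ne_zero i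
    have step2 : ∑ i ∈ Finset.range (m + 1),
        (if i + 1 = 0 then A0coef a (m+1) else Acoef a (i+1) x) * charlier a (m + 1 - (i+1)) x
        = ∑ i ∈ Finset.range (m + 1), ∑ k ∈ Finset.range (i + 1),
            ((-1:ℝ) ^ (k+1) * charlier (-a) (i - k) (-x + 1) * Dd a (k+1) x) * charlier a (m - i) x := by
      apply Finset.sum_congr rfl
      intro i hi
      rw [if_neg (hne i)]
      have : m + 1 - (i + 1) = m - i := by omega
      rw [this, Acoef, ← Finset.Ico_add_one_right_eq_Icc, Finset.sum_Ico_eq_sum_range, Finset.sum_mul]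
      apply Finset.sum_congr rfl
      intro k hk
      rw [show 1 + k = k + 1 from by omega, show i + 1 - (k + 1) = i - k from by omega]
      simp only [Dd]
    rw [step2]
    -- swap the double sum
    have swap : ∑ i ∈ Finset.range (m + 1), ∑ k ∈ Finset.range (i + 1),
            ((-1:ℝ) ^ (k+1) * charlier (-a) (i - k) (-x + 1) * Dd a (k+1) x) * charlier a (m - i) x
        = ∑ k ∈ Finset.range (m + 1), ∑ i ∈ Finset.Ico k (m + 1),
            ((-1:ℝ) ^ (k+1) * charlier (-a) (i - k) (-x + 1) * Dd a (k+1) x) * charlier a (m - i) x := by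
      simp only [Finset.range_eq_Ico]
      rw [← Finset.sum_Ico_Ico_comm 0 (m+1)
        (fun k i => ((-1:ℝ) ^ (k+1) * charlier (-a) (i - k) (-x + 1) * Dd a (k+1) x) * charlier a (m - i) x)]
    rw [swap]
    -- inner sums via convolution
    have inner : ∀ k ∈ Finset.range (m + 1),
        ∑ i ∈ Finset.Ico k (m + 1),
            ((-1:ℝ) ^ (k+1) * charlier (-a) (i - k) (-x + 1) * Dd a (k+1) x) * charlier a (m - i) x
          = (-1:ℝ) ^ (k+1) * Dd a (k+1) x * (if m - k ≤ 1 then 1 else 0) := by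
      intro k hk
      simp only [Finset.mem_range] at hk
      rw [Finset.sum_Ico_eq_sum_range]
      have e3 : m + 1 - k = (m - k) + 1 := by omega
      rw [e3]
      have : ∀ r ∈ Finset.range ((m - k) + 1),
          ((-1:ℝ) ^ (k+1) * charlier (-a) ((k + r) - k) (-x + 1) * Dd a (k+1) x) * charlier a (m - (k + r)) x
          = ((-1:ℝ) ^ (k+1) * Dd a (k+1) x) * (charlier (-a) r (-x + 1) * charlier a ((m - k) - r) x) := by
        intro r hr
        have e4 : (k + r) - k = r := by omega
        have e5 : m - (k + r) = (m - k) - r := by omega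
        rw [e4, e5]
        ring
      rw [Finset.sum_congr rfl this, ← Finset.mul_sum, conv a x (-x+1) (m - k)]
      rw [show x + (-x + 1) = 1 by ring, gc_one]
    rw [Finset.sum_congr rfl inner]
    -- reduce to last two terms
    have sumD : ∑ k ∈ Finset.range (m + 1),
        (-1:ℝ) ^ (k+1) * Dd a (k+1) x * (if m - k ≤ 1 then 1 else 0)
        = (-1:ℝ) ^ (m+1) * Dd a (m+1) x + (-1:ℝ) ^ m * Dd a m x := by
      rcases m with _ | t
      · simp [Dd_zero]
      · rw [Finset.sum_range_succ, Finset.sum_range_succ]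
        have hz : ∀ k ∈ Finset.range t,
            (-1:ℝ) ^ (k+1) * Dd a (k+1) x * (if t + 1 - k ≤ 1 then 1 else 0) = 0 := by
          intro k hk
          simp only [Finset.mem_range] at hk
          rw [if_neg (by omega), mul_zero]
        rw [Finset.sum_eq_zero hz, zero_add]
        rw [if_pos (by omega : t + 1 - t ≤ 1), if_pos (by omega : t + 1 - (t+1) ≤ 1)]
        ring
    rw [sumD]
    -- final algebra
    have hA0 : A0coef a (m+1) = (-1:ℝ) ^ m * charlier a m (-2) := by
      rw [A0coef]
      have e6 : ((m + 1 : ℕ) : ℤ) - 1 = (m : ℤ) := by push_cast; ring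
      rw [e6]
      have e7 : charlierZ a (m : ℤ) (-2) = charlier a m (-2) := by
        simp only [charlierZ]
        rw [if_pos (by omega : (0:ℤ) ≤ (m:ℤ))]
        norm_num
      rw [e7, zpow_natCast]
    have hsign : (-1:ℝ) ^ (((m + 1 : ℕ) : ℤ) - 1) = (-1:ℝ) ^ m := by
      have e6 : ((m + 1 : ℕ) : ℤ) - 1 = (m : ℤ) := by push_cast; ring
      rw [e6, zpow_natCast]
    have hCZ : charlierZ a (((m + 1 : ℕ) : ℤ) - 1) (x - 2) = charlier a m (x - 2) := by
      have e6 : ((m + 1 : ℕ) : ℤ) - 1 = (m : ℤ) := by push_cast; ring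
      rw [e6]
      simp only [charlierZ]
      rw [if_pos (by omega : (0:ℤ) ≤ (m:ℤ))]
      norm_num
    rw [hA0, hsign, hCZ]
    have h1 : charlier a m (x - 1) = charlier a (m+1) x - charlier a (m+1) (x - 1) := by
      linarith [charlier_rec a m x]
    have h2 : charlier a m (x - 2) = charlier a (m+1) (x-1) - charlier a (m+1) (x - 2) := by
      have := charlier_rec a m (x - 1)
      rw [show x - 1 - 1 = x - 2 by ring] at this
      linarith
    have h3 : charlier a m (-1) = charlier a (m+1) 0 - charlier a (m+1) (-1) := by
      have := charlier_rec a m 0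
      rw [show (0:ℝ) - 1 = -1 by ring] at this
      linarith
    have h4 : charlier a m (-2) = charlier a (m+1) (-1) - charlier a (m+1) (-2) := by
      have := charlier_rec a m (-1)
      rw [show (-1:ℝ) - 1 = -2 by ring] at this
      linarith
    simp only [Dd]
    rw [h1, h2, h3, h4]
    ring
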